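/- Consider minimizing g(D) = (1/2)Tr(DᵀDA) − Tr(DᵀB) over the set C = {D ∈ ℝ^{m×k} : ‖d_j‖₂ ≤ 1 for each column j}, with A symmetric positive definite. Block-coordinate descent cycling over the columns of D (each step projecting u_j = (1/A[j,j])(b_j − Da_j) + d_j onto the unit ℓ²-ball) converges to the global minimizer of g on C. -/

import Mathlib

open Finset Matrix

/-- One block-coordinate update of column `j` of the dictionary:
replace column `j` with the projection of `u_j = (1/A[j,j])(b_j − D a_j) + d_j`
onto the unit `ℓ²`-ball. -/
noncomputable def updCol {m k : ℕ} (A : Matrix (Fin k) (Fin k) ℝ)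
    (B : Matrix (Fin m) (Fin k) ℝ) (D : Matrix (Fin m) (Fin k) ℝ) (j : Fin k) :
    Matrix (Fin m) (Fin k) ℝ :=
  let u : Fin m → ℝ := fun i => (1 / A j j) * (B i j - ∑ l, D i l * A l j) + D i j
  fun i l => if l = j then u i / max (Real.sqrt (∑ i', (u i')^2)) 1 else D i l

/-- One full cycle of block-coordinate descent over the columns of `D`. -/
noncomputable def bcdCycle {m k : ℕ} (A : Matrix (Fin k) (Fin k) ℝ)
    (B : Matrix (Fin m) (Fin k) ℝ) (D : Matrix (Fin m) (Fin k) ℝ) :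
    Matrix (Fin m) (Fin k) ℝ :=
  (List.finRange k).foldl (updCol A B) D

namespace BCDaux
variable {m k : ℕ}

/-- entrywise form of the objective -/
noncomputable def gS (A : Matrix (Fin k) (Fin k) ℝ) (B D : Matrix (Fin m) (Fin k) ℝ) : ℝ :=
  (1/2) * (∑ i, ∑ j, ∑ l, D i j * D i l * A l j) - ∑ i, ∑ j, D i j * B i j

def setCol (D : Matrix (Fin m) (Fin k) ℝ) (j : Fin k) (d : Fin m → ℝ) :
    Matrix (Fin m) (Fin k) ℝ := fun i l => if l = j then d i else D i l

noncomputable def uvec (A : Matrix (Fin k) (Fin k) ℝ) (B D : Matrix (Fin m) (Fin k) ℝ)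
    (j : Fin k) : Fin m → ℝ :=
  fun i => (1 / A j j) * (B i j - ∑ l, D i l * A l j) + D i j

noncomputable def proj (v : Fin m → ℝ) : Fin m → ℝ :=
  fun i => v i / max (Real.sqrt (∑ i', (v i')^2)) 1

lemma quad_update (A : Matrix (Fin k) (Fin k) ℝ) (hsym : ∀ a b, A a b = A b a)
    (x : Fin k → ℝ) (j : Fin k) (e : ℝ) :
    ∑ j', ∑ l, (x j' + if j' = j then e else 0) * (x l + if l = j then e else 0) * A l j'
      = (∑ j', ∑ l, x j' * x l * A l j') + 2 * e * (∑ l, x l * A l j) + e^2 * A j j := by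
  have expand : ∀ j' l : Fin k,
      (x j' + if j' = j then e else 0) * (x l + if l = j then e else 0) * A l j'
      = x j' * x l * A l j' + (if j' = j then e * (x l * A l j') else 0)
        + (if l = j then x j' * (e * A l j') else 0)
        + (if j' = j then (if l = j then e^2 * A l j' else 0) else 0) := by
    intro j' l; by_cases h1 : j' = j <;> by_cases h2 : l = j <;> simp [h1, h2] <;> ring
  simp only [expand, Finset.sum_add_distrib, Finset.sum_ite_eq', Finset.mem_univ, if_true,
    ← Finset.mul_sum, ← Finset.sum_mul]
  have h1 : ∑ l, x l * A l j = ∑ l, x l * A j l := by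
    exact Finset.sum_congr rfl fun l _ => by rw [hsym l j]
  have h2 : ∑ j', x j' * (e * A j j') = e * ∑ l, x l * A l j := by
    rw [Finset.mul_sum]; exact Finset.sum_congr rfl fun l _ => by rw [hsym j l]; ring
  have h3 : (∑ x1 : Fin k, ∑ x2 : Fin k, if x1 = j then e * (x x2 * A x2 x1) else 0)
      = e * ∑ l, x l * A l j := by
    rw [Finset.sum_comm]
    simp only [Finset.sum_ite_eq', Finset.mem_univ, if_true]
    rw [Finset.mul_sum]
  have h4 : (∑ x1 : Fin k, ∑ x2 : Fin k, if x1 = j then if x2 = j then e^2 * A x2 x1 else 0 else 0)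
      = e^2 * A j j := by simp
  rw [h3, h4, h2]; ring


lemma gS_setCol (A : Matrix (Fin k) (Fin k) ℝ) (hsym : ∀ a b, A a b = A b a)
    (B D : Matrix (Fin m) (Fin k) ℝ) (j : Fin k) (d : Fin m → ℝ) :
    gS A B (setCol D j d) = gS A B D
      + (∑ i, (d i - D i j) * ((∑ l, D i l * A l j) - B i j))
      + (A j j / 2) * ∑ i, (d i - D i j)^2 := by
  have hE : ∀ i l, setCol D j d i l = D i l + (if l = j then d i - D i j else 0) := by
    intro i l; by_cases h : l = j <;> simp [setCol, h]
  unfold gS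
  have hquad : ∀ i : Fin m,
      (∑ j', ∑ l, setCol D j d i j' * setCol D j d i l * A l j')
      = (∑ j', ∑ l, D i j' * D i l * A l j')
        + 2 * (d i - D i j) * (∑ l, D i l * A l j) + (d i - D i j)^2 * A j j := by
    intro i
    have := quad_update A hsym (fun l => D i l) j (d i - D i j)
    simpa only [hE] using this
  have hlin : ∀ i : Fin m,
      (∑ j', setCol D j d i j' * B i j')
      = (∑ j', D i j' * B i j') + (d i - D i j) * B i j := by
    intro i
    have : ∀ j', setCol D j d i j' * B i j'
        = D i j' * B i j' + (if j' = j then (d i - D i j) * B i j' else 0) := by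
      intro j'; by_cases h : j' = j <;> simp [setCol, h] <;> ring
    simp [this, Finset.sum_add_distrib]
  simp only [hquad, hlin, Finset.sum_add_distrib]
  have hS1 : ∑ i : Fin m, 2 * (d i - D i j) * (∑ l, D i l * A l j)
      = 2 * ∑ i : Fin m, (d i - D i j) * (∑ l, D i l * A l j) := by
    rw [Finset.mul_sum]; exact Finset.sum_congr rfl fun i _ => by ring
  have hS2 : ∑ i : Fin m, (d i - D i j)^2 * A j j
      = A j j * ∑ i : Fin m, (d i - D i j)^2 := by
    rw [Finset.mul_sum]; exact Finset.sum_congr rfl fun i _ => by ring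
  have e2 : ∑ i, (d i - D i j) * ((∑ l, D i l * A l j) - B i j)
      = (∑ i, (d i - D i j) * (∑ l, D i l * A l j)) - ∑ i, (d i - D i j) * B i j := by
    rw [← Finset.sum_sub_distrib]
    exact Finset.sum_congr rfl fun i _ => by ring
  rw [hS1, hS2, e2]
  ring


lemma grad_eq (A : Matrix (Fin k) (Fin k) ℝ) (B D : Matrix (Fin m) (Fin k) ℝ)
    (j : Fin k) (ha : A j j ≠ 0) (i : Fin m) :
    (∑ l, D i l * A l j) - B i j = A j j * (D i j - uvec A B D j i) := by
  unfold uvec; field_simp; ring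

/-- the column objective as squared distance to `uvec` -/
lemma gS_setCol_dist (A : Matrix (Fin k) (Fin k) ℝ) (hsym : ∀ a b, A a b = A b a)
    (B D : Matrix (Fin m) (Fin k) ℝ) (j : Fin k) (ha : A j j ≠ 0) (d : Fin m → ℝ) :
    gS A B (setCol D j d) = gS A B D
      + (A j j / 2) * ((∑ i, (d i - uvec A B D j i)^2) - ∑ i, (D i j - uvec A B D j i)^2) := by
  rw [gS_setCol A hsym B D j d]
  set u := uvec A B D j with hu
  have h1 : ∑ i, (d i - D i j) * ((∑ l, D i l * A l j) - B i j)
      = ∑ i, (d i - D i j) * (A j j * (D i j - u i)) :=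
    Finset.sum_congr rfl fun i _ => by rw [grad_eq A B D j ha i]
  rw [h1]
  have h2 : (∑ i, (d i - u i)^2) - ∑ i, (D i j - u i)^2
      = ∑ i, ((d i - u i)^2 - (D i j - u i)^2) := by rw [Finset.sum_sub_distrib]
  rw [h2, Finset.mul_sum, Finset.mul_sum, add_assoc, ← Finset.sum_add_distrib]
  congr 1
  exact Finset.sum_congr rfl fun i _ => by ring

lemma sum_sq_nonneg (v : Fin m → ℝ) : (0:ℝ) ≤ ∑ i, (v i)^2 :=
  Finset.sum_nonneg fun i _ => sq_nonneg _

lemma projM_pos (v : Fin m → ℝ) : (0:ℝ) < max (Real.sqrt (∑ i', (v i')^2)) 1 :=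
  lt_of_lt_of_le one_pos (le_max_right _ _)

lemma projM_sq (v : Fin m → ℝ) : (∑ i', (v i')^2) ≤ (max (Real.sqrt (∑ i', (v i')^2)) 1)^2 := by
  have h0 : (0:ℝ) ≤ ∑ i', (v i')^2 := sum_sq_nonneg v
  calc (∑ i', (v i')^2) = (Real.sqrt (∑ i', (v i')^2))^2 := (Real.sq_sqrt h0).symm
  _ ≤ (max (Real.sqrt (∑ i', (v i')^2)) 1)^2 := by
      apply pow_le_pow_left₀ (Real.sqrt_nonneg _) (le_max_left _ _)

lemma proj_mem (v : Fin m → ℝ) : ∑ i, (proj v i)^2 ≤ 1 := by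
  unfold proj
  set M := max (Real.sqrt (∑ i', (v i')^2)) 1 with hM
  have hMpos := projM_pos v
  have : ∑ i, (v i / M)^2 = (∑ i, (v i)^2) / M^2 := by
    rw [Finset.sum_div]; exact Finset.sum_congr rfl fun i _ => by rw [div_pow]
  rw [this, div_le_one (by positivity)]
  exact projM_sq v

/-- variational inequality for the projection -/
lemma proj_var (v : Fin m → ℝ) (e : Fin m → ℝ) (he : ∑ i, (e i)^2 ≤ 1) :
    0 ≤ ∑ i, (proj v i - v i) * (e i - proj v i) := by
  unfold proj
  set s := ∑ i', (v i')^2 with hs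
  set M := max (Real.sqrt s) 1 with hM
  have hMpos : (0:ℝ) < M := projM_pos v
  have hM1 : (1:ℝ) ≤ M := le_max_right _ _
  have key : ∑ i, (v i / M - v i) * (e i - v i / M)
      = (1/M - 1) * ((∑ i, v i * e i) - s/M) := by
    rw [hs, Finset.sum_div, ← Finset.sum_sub_distrib, Finset.mul_sum]
    refine Finset.sum_congr rfl fun i _ => ?_
    field_simp
  rw [key]
  rcases le_or_gt (Real.sqrt s) 1 with h | h
  · have : M = 1 := by rw [hM, max_eq_right h]
    rw [this]; simp
  · have hMs : M = Real.sqrt s := by rw [hM, max_eq_left h.le]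
    have hs0 : (0:ℝ) ≤ s := sum_sq_nonneg v
    have hsqpos : 0 < Real.sqrt s := lt_trans one_pos h
    have hinner : (∑ i, v i * e i) ≤ Real.sqrt s := by
      have h1 : (∑ i, v i * e i)^2 ≤ s * ∑ i, (e i)^2 :=
        Finset.sum_mul_sq_le_sq_mul_sq _ _ _
      have h2 : (∑ i, v i * e i)^2 ≤ s := by
        calc (∑ i, v i * e i)^2 ≤ s * ∑ i, (e i)^2 := h1
        _ ≤ s * 1 := by apply mul_le_mul_of_nonneg_left he hs0
        _ = s := mul_one s
      calc (∑ i, v i * e i) ≤ |∑ i, v i * e i| := le_abs_self _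
      _ = Real.sqrt ((∑ i, v i * e i)^2) := (Real.sqrt_sq_eq_abs _).symm
      _ ≤ Real.sqrt s := Real.sqrt_le_sqrt h2
    have hsM : s / M = Real.sqrt s := by
      rw [hMs, Real.div_sqrt]
    have hfac : 1/M - 1 ≤ 0 := by
      have : 1/M ≤ 1 := by
        rw [div_le_one hMpos]; exact hM1
      linarith
    have hterm : (∑ i, v i * e i) - s/M ≤ 0 := by rw [hsM]; linarith
    nlinarith [mul_nonneg (neg_nonneg.2 hfac) (neg_nonneg.2 hterm)]


lemma proj_dist (v e : Fin m → ℝ) (he : ∑ i, (e i)^2 ≤ 1) :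
    (∑ i, (proj v i - v i)^2) + ∑ i, (e i - proj v i)^2 ≤ ∑ i, (e i - v i)^2 := by
  have hvar := proj_var v e he
  have hexp : ∑ i, (e i - v i)^2
      = (∑ i, (proj v i - v i)^2) + (∑ i, (e i - proj v i)^2)
        + 2 * ∑ i, (proj v i - v i) * (e i - proj v i) := by
    rw [Finset.mul_sum, ← Finset.sum_add_distrib, ← Finset.sum_add_distrib]
    exact Finset.sum_congr rfl fun i _ => by ring
  rw [hexp]
  linarith

lemma eq_proj_of_dist_le (v e : Fin m → ℝ) (he : ∑ i, (e i)^2 ≤ 1)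
    (hd : ∑ i, (e i - v i)^2 ≤ ∑ i, (proj v i - v i)^2) : e = proj v := by
  have h1 := proj_dist v e he
  have h2 : ∑ i, (e i - proj v i)^2 ≤ 0 := by linarith
  have h3 : ∑ i, (e i - proj v i)^2 = 0 :=
    le_antisymm h2 (sum_sq_nonneg _)
  funext i
  have h4 := (Finset.sum_eq_zero_iff_of_nonneg (fun i _ => sq_nonneg (e i - proj v i))).1 h3 i
    (Finset.mem_univ i)
  have h5 : e i - proj v i = 0 := by
    have := sq_eq_zero_iff.1 h4; exact this
  linarith

lemma quad_expand (A : Matrix (Fin k) (Fin k) ℝ) (hsym : ∀ a b, A a b = A b a)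
    (x z : Fin k → ℝ) :
    ∑ j', ∑ l, (x j' + z j') * (x l + z l) * A l j'
      = (∑ j', ∑ l, x j' * x l * A l j')
        + 2 * (∑ j', z j' * (∑ l, x l * A l j'))
        + ∑ j', ∑ l, z j' * z l * A l j' := by
  have expand : ∀ j' l : Fin k, (x j' + z j') * (x l + z l) * A l j'
      = x j' * x l * A l j' + x j' * z l * A l j' + z j' * x l * A l j'
        + z j' * z l * A l j' := by intro j' l; ring
  simp only [expand, Finset.sum_add_distrib]
  have hcross : ∑ j', ∑ l, x j' * z l * A l j' = ∑ j', z j' * (∑ l, x l * A l j') := by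
    rw [Finset.sum_comm]
    refine Finset.sum_congr rfl fun j' _ => ?_
    rw [Finset.mul_sum]
    refine Finset.sum_congr rfl fun l _ => ?_
    rw [hsym j' l]; ring
  have hcross2 : ∑ j', ∑ l, z j' * x l * A l j' = ∑ j', z j' * (∑ l, x l * A l j') := by
    refine Finset.sum_congr rfl fun j' _ => ?_
    rw [Finset.mul_sum]
    exact Finset.sum_congr rfl fun l _ => by ring
  rw [hcross, hcross2]
  ring

lemma gS_expand (A : Matrix (Fin k) (Fin k) ℝ) (hsym : ∀ a b, A a b = A b a)
    (B D E : Matrix (Fin m) (Fin k) ℝ) :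
    gS A B E = gS A B D
      + (∑ i, ∑ j, (E i j - D i j) * ((∑ l, D i l * A l j) - B i j))
      + (1/2) * ∑ i, ∑ j, ∑ l, (E i j - D i j) * (E i l - D i l) * A l j := by
  unfold gS
  have hE : ∀ i l, E i l = D i l + (E i l - D i l) := fun i l => by ring
  have hquad : ∀ i : Fin m, ∑ j', ∑ l, E i j' * E i l * A l j'
      = (∑ j', ∑ l, D i j' * D i l * A l j')
        + 2 * (∑ j', (E i j' - D i j') * (∑ l, D i l * A l j'))
        + ∑ j', ∑ l, (E i j' - D i j') * (E i l - D i l) * A l j' := by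
    intro i
    have := quad_expand A hsym (fun l => D i l) (fun l => E i l - D i l)
    simpa only [← hE] using this
  have hlin : ∀ i : Fin m, ∑ j', E i j' * B i j'
      = (∑ j', D i j' * B i j') + ∑ j', (E i j' - D i j') * B i j' := by
    intro i
    rw [← Finset.sum_add_distrib]
    exact Finset.sum_congr rfl fun j' _ => by ring
  simp only [hquad, hlin, Finset.sum_add_distrib]
  have h1 : ∑ i : Fin m, 2 * (∑ j', (E i j' - D i j') * (∑ l, D i l * A l j'))
      = 2 * ∑ i : Fin m, ∑ j', (E i j' - D i j') * (∑ l, D i l * A l j') := by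
    rw [Finset.mul_sum]
  have h2 : ∑ i : Fin m, ∑ j', (E i j' - D i j') * ((∑ l, D i l * A l j') - B i j')
      = (∑ i : Fin m, ∑ j', (E i j' - D i j') * (∑ l, D i l * A l j'))
        - ∑ i : Fin m, ∑ j', (E i j' - D i j') * B i j' := by
    rw [← Finset.sum_sub_distrib]
    refine Finset.sum_congr rfl fun i _ => ?_
    rw [← Finset.sum_sub_distrib]
    exact Finset.sum_congr rfl fun j' _ => by ring
  rw [h1, h2]
  ring


lemma qf_eq (A : Matrix (Fin k) (Fin k) ℝ) (hsym : ∀ a b, A a b = A b a) (x : Fin k → ℝ) :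
    ∑ j, ∑ l, x j * x l * A l j = x ⬝ᵥ A.mulVec x := by
  have h : x ⬝ᵥ A.mulVec x = ∑ j, ∑ l, x j * (A j l * x l) := by
    simp [dotProduct, Matrix.mulVec, Finset.mul_sum]
  rw [h]
  exact Finset.sum_congr rfl fun j _ => Finset.sum_congr rfl fun l _ => by
    rw [hsym l j]; ring

lemma qf_pos {A : Matrix (Fin k) (Fin k) ℝ} (hA : A.PosDef) {x : Fin k → ℝ} (hx : x ≠ 0) :
    0 < ∑ j, ∑ l, x j * x l * A l j := by
  have hsym : ∀ a b, A a b = A b a := fun a b => by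
    have := hA.1.apply a b; simpa using this.symm
  rw [qf_eq A hsym x]
  have := hA.dotProduct_mulVec_pos hx
  simpa using this

lemma qf_nonneg {A : Matrix (Fin k) (Fin k) ℝ} (hA : A.PosDef) (x : Fin k → ℝ) :
    0 ≤ ∑ j, ∑ l, x j * x l * A l j := by
  by_cases hx : x = 0
  · subst hx; simp
  · exact (qf_pos hA hx).le

lemma diag_pos {A : Matrix (Fin k) (Fin k) ℝ} (hA : A.PosDef) (j : Fin k) : 0 < A j j := by
  set y : Fin k → ℝ := Pi.single j 1 with hy
  have hy0 : y ≠ 0 := by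
    intro h
    have := congrFun h j
    simp [hy] at this
  have h := qf_pos hA hy0
  have hcoll : ∑ j', ∑ l, y j' * y l * A l j' = A j j := by
    have hpt : ∀ j' l : Fin k, y j' * y l * A l j'
        = if j' = j then (if l = j then A l j' else 0) else 0 := by
      intro j' l
      by_cases h1 : j' = j <;> by_cases h2 : l = j <;>
        simp [hy, Pi.single_apply, h1, h2]
    simp [hpt]
  rw [hcoll] at h
  exact h

def Feas (D : Matrix (Fin m) (Fin k) ℝ) : Prop := ∀ j : Fin k, ∑ i, (D i j)^2 ≤ 1

lemma updCol_eq (A : Matrix (Fin k) (Fin k) ℝ) (B D : Matrix (Fin m) (Fin k) ℝ) (j : Fin k) :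
    updCol A B D j = setCol D j (proj (uvec A B D j)) := rfl

lemma setCol_self (D : Matrix (Fin m) (Fin k) ℝ) (j : Fin k) :
    setCol D j (fun i => D i j) = D := by
  funext i l
  by_cases h : l = j <;> simp [setCol, h]

lemma updCol_feas {A : Matrix (Fin k) (Fin k) ℝ} {B D : Matrix (Fin m) (Fin k) ℝ}
    (hD : Feas D) (j : Fin k) : Feas (updCol A B D j) := by
  intro j'
  rw [updCol_eq]
  by_cases h : j' = j
  · subst h
    simpa [setCol] using proj_mem (uvec A B D j')
  · simpa [setCol, h] using hD j'

lemma gS_updCol_le {A : Matrix (Fin k) (Fin k) ℝ} (hA : A.PosDef)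
    (hsym : ∀ a b, A a b = A b a) {B D : Matrix (Fin m) (Fin k) ℝ}
    (hD : Feas D) (j : Fin k) : gS A B (updCol A B D j) ≤ gS A B D := by
  rw [updCol_eq, gS_setCol_dist A hsym B D j (diag_pos hA j).ne']
  set u := uvec A B D j
  have hdist := proj_dist u (fun i => D i j) (hD j)
  have h1 : (∑ i, (proj u i - u i)^2) ≤ ∑ i, (D i j - u i)^2 := by
    have := sum_sq_nonneg (fun i => D i j - proj u i)
    calc (∑ i, (proj u i - u i)^2)
        ≤ (∑ i, (proj u i - u i)^2) + ∑ i, (D i j - proj u i)^2 := by linarith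
      _ ≤ ∑ i, (D i j - u i)^2 := hdist
  have ha : 0 < A j j := diag_pos hA j
  nlinarith [h1]

lemma updCol_fix_of_gS_eq {A : Matrix (Fin k) (Fin k) ℝ} (hA : A.PosDef)
    (hsym : ∀ a b, A a b = A b a) {B D : Matrix (Fin m) (Fin k) ℝ}
    (hD : Feas D) (j : Fin k) (heq : gS A B (updCol A B D j) = gS A B D) :
    updCol A B D j = D := by
  have hdd := gS_setCol_dist A hsym B D j (diag_pos hA j).ne' (proj (uvec A B D j))
  rw [← updCol_eq] at hdd
  rw [heq] at hdd
  set u := uvec A B D j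
  have ha : 0 < A j j := diag_pos hA j
  have h0 : (∑ i, (proj u i - u i)^2) - ∑ i, ((fun i => D i j) i - u i)^2 = 0 := by
    have : A j j / 2 * ((∑ i, (proj u i - u i)^2) - ∑ i, (D i j - u i)^2) = 0 := by linarith
    have h2 : A j j / 2 ≠ 0 := by positivity
    simpa [h2] using mul_eq_zero.1 this
  have hle : ∑ i, ((fun i => D i j) i - u i)^2 ≤ ∑ i, (proj u i - u i)^2 := by
    simp only [] at h0 ⊢; linarith
  have hcol : (fun i => D i j) = proj u := eq_proj_of_dist_le u _ (hD j) hle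
  rw [updCol_eq]
  have : setCol D j (proj u) = setCol D j (fun i => D i j) := by rw [← hcol]
  rw [this, setCol_self]

lemma fixed_global_min {A : Matrix (Fin k) (Fin k) ℝ} (hA : A.PosDef)
    (hsym : ∀ a b, A a b = A b a) {B D : Matrix (Fin m) (Fin k) ℝ}
    (hD : Feas D) (hfix : ∀ j, updCol A B D j = D)
    (E : Matrix (Fin m) (Fin k) ℝ) (hE : Feas E) : gS A B D ≤ gS A B E := by
  rw [gS_expand A hsym B D E]
  have hlin : 0 ≤ ∑ i, ∑ j, (E i j - D i j) * ((∑ l, D i l * A l j) - B i j) := by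
    rw [Finset.sum_comm]
    refine Finset.sum_nonneg fun j _ => ?_
    have hcolfix : ∀ i, D i j = proj (uvec A B D j) i := by
      intro i
      have h := congrFun (congrFun (hfix j) i) j
      rw [updCol_eq] at h
      simpa [setCol] using h.symm
    have hvar := proj_var (uvec A B D j) (fun i => E i j) (hE j)
    have : ∑ i, (E i j - D i j) * ((∑ l, D i l * A l j) - B i j)
        = A j j * ∑ i, (proj (uvec A B D j) i - uvec A B D j i) * (E i j - proj (uvec A B D j) i) := by
      rw [Finset.mul_sum]
      refine Finset.sum_congr rfl fun i _ => ?_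
      rw [grad_eq A B D j (diag_pos hA j).ne' i, ← hcolfix i]
      ring
    rw [this]
    exact mul_nonneg (diag_pos hA j).le hvar
  have hquad : 0 ≤ ∑ i, ∑ j, ∑ l, (E i j - D i j) * (E i l - D i l) * A l j :=
    Finset.sum_nonneg fun i _ => qf_nonneg hA (fun j => E i j - D i j)
  linarith [hquad]


lemma feas_mid {D1 D2 : Matrix (Fin m) (Fin k) ℝ} (h1 : Feas D1) (h2 : Feas D2) :
    Feas (fun i l => (D1 i l + D2 i l)/2 : Matrix (Fin m) (Fin k) ℝ) := by
  intro j
  have hpt : ∀ i, ((D1 i j + D2 i j)/2)^2 ≤ ((D1 i j)^2 + (D2 i j)^2)/2 := by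
    intro i; nlinarith [sq_nonneg (D1 i j - D2 i j)]
  calc ∑ i, ((D1 i j + D2 i j)/2)^2 ≤ ∑ i, ((D1 i j)^2 + (D2 i j)^2)/2 :=
        Finset.sum_le_sum fun i _ => hpt i
    _ = ((∑ i, (D1 i j)^2) + ∑ i, (D2 i j)^2)/2 := by
        simp [add_div, Finset.sum_add_distrib, Finset.sum_div]
    _ ≤ 1 := by have := h1 j; have := h2 j; linarith

lemma min_unique {A : Matrix (Fin k) (Fin k) ℝ} (hA : A.PosDef)
    (hsym : ∀ a b, A a b = A b a) {B D1 D2 : Matrix (Fin m) (Fin k) ℝ}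
    (h1 : Feas D1) (h2 : Feas D2)
    (hm1 : ∀ E, Feas E → gS A B D1 ≤ gS A B E)
    (hm2 : ∀ E, Feas E → gS A B D2 ≤ gS A B E) : D1 = D2 := by
  by_contra hne
  set Mm : Matrix (Fin m) (Fin k) ℝ := fun i l => (D1 i l + D2 i l)/2 with hMm
  have hMfeas : Feas Mm := feas_mid h1 h2
  have e1 := gS_expand A hsym B Mm D1
  have e2 := gS_expand A hsym B Mm D2
  have hneg : ∀ i jj, D2 i jj - Mm i jj = -(D1 i jj - Mm i jj) := by
    intro i jj; simp [hMm]; ring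
  have hlin : (∑ i, ∑ jj, (D2 i jj - Mm i jj) * ((∑ l, Mm i l * A l jj) - B i jj))
      = -(∑ i, ∑ jj, (D1 i jj - Mm i jj) * ((∑ l, Mm i l * A l jj) - B i jj)) := by
    rw [← Finset.sum_neg_distrib]
    refine Finset.sum_congr rfl fun i _ => ?_
    rw [← Finset.sum_neg_distrib]
    refine Finset.sum_congr rfl fun jj _ => ?_
    rw [hneg i jj]; ring
  have hquadeq : (∑ i, ∑ jj, ∑ l, (D2 i jj - Mm i jj) * (D2 i l - Mm i l) * A l jj)
      = ∑ i, ∑ jj, ∑ l, (D1 i jj - Mm i jj) * (D1 i l - Mm i l) * A l jj := by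
    refine Finset.sum_congr rfl fun i _ => Finset.sum_congr rfl fun jj _ =>
      Finset.sum_congr rfl fun l _ => ?_
    rw [hneg i jj, hneg i l]; ring
  have hW : ∃ i0 : Fin m, (fun jj => D1 i0 jj - Mm i0 jj) ≠ 0 := by
    by_contra hc
    push_neg at hc
    apply hne
    funext i jj
    have := congrFun (hc i) jj
    simp [hMm] at this
    linarith
  obtain ⟨i0, hi0⟩ := hW
  have hQpos : 0 < ∑ i, ∑ jj, ∑ l, (D1 i jj - Mm i jj) * (D1 i l - Mm i l) * A l jj := by
    refine Finset.sum_pos' (fun i _ => qf_nonneg hA _) ⟨i0, Finset.mem_univ i0, ?_⟩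
    exact qf_pos hA hi0
  have hMlt : gS A B Mm < gS A B D1 := by
    have hsum : gS A B D1 + gS A B D2 = 2 * gS A B Mm
        + (∑ i, ∑ jj, ∑ l, (D1 i jj - Mm i jj) * (D1 i l - Mm i l) * A l jj) := by
      rw [e1, e2, hlin, hquadeq]; ring
    have hle : gS A B D1 ≤ gS A B D2 := hm1 D2 h2
    have hge : gS A B D2 ≤ gS A B D1 := hm2 D1 h1
    have heq : gS A B D1 = gS A B D2 := le_antisymm hle hge
    nlinarith
  exact absurd (hm1 Mm hMfeas) (not_le.2 hMlt)

lemma foldl_feas {A : Matrix (Fin k) (Fin k) ℝ} (hA : A.PosDef)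
    (hsym : ∀ a b, A a b = A b a) (B : Matrix (Fin m) (Fin k) ℝ) :
    ∀ (l : List (Fin k)) (D : Matrix (Fin m) (Fin k) ℝ), Feas D →
      Feas (l.foldl (updCol A B) D) ∧ gS A B (l.foldl (updCol A B) D) ≤ gS A B D := by
  intro l
  induction l with
  | nil => intro D hD; exact ⟨hD, le_refl _⟩
  | cons j l ih =>
    intro D hD
    have h1 : Feas (updCol A B D j) := updCol_feas hD j
    have h2 := gS_updCol_le hA hsym (B := B) hD j
    obtain ⟨hf, hle⟩ := ih (updCol A B D j) h1
    exact ⟨hf, le_trans hle h2⟩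

lemma foldl_fix {A : Matrix (Fin k) (Fin k) ℝ} (hA : A.PosDef)
    (hsym : ∀ a b, A a b = A b a) (B : Matrix (Fin m) (Fin k) ℝ) :
    ∀ (l : List (Fin k)) (D : Matrix (Fin m) (Fin k) ℝ), Feas D →
      gS A B (l.foldl (updCol A B) D) = gS A B D →
      (∀ j ∈ l, updCol A B D j = D) ∧ l.foldl (updCol A B) D = D := by
  intro l
  induction l with
  | nil => intro D _ _; exact ⟨by simp, rfl⟩
  | cons j l ih =>
    intro D hD heq
    simp only [List.foldl_cons] at heq ⊢
    have h1 : Feas (updCol A B D j) := updCol_feas hD j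
    have h2 := gS_updCol_le hA hsym (B := B) hD j
    have h3 := (foldl_feas hA hsym B l (updCol A B D j) h1).2
    have h4 : gS A B (updCol A B D j) = gS A B D := le_antisymm h2 (by
      rw [← heq] at *; linarith)
    have h5 : updCol A B D j = D := updCol_fix_of_gS_eq hA hsym hD j h4
    rw [h5] at heq ⊢
    obtain ⟨ha, hb⟩ := ih D hD heq
    refine ⟨?_, hb⟩
    intro j' hj'
    rcases List.mem_cons.1 hj' with h | h
    · subst h; exact h5
    · exact ha j' h


lemma cont_entry (i : Fin m) (j : Fin k) :
    Continuous fun D : Matrix (Fin m) (Fin k) ℝ => D i j :=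
  (continuous_apply j).comp (continuous_apply i)

lemma cont_gS (A : Matrix (Fin k) (Fin k) ℝ) (B : Matrix (Fin m) (Fin k) ℝ) :
    Continuous (gS A B) := by
  unfold gS
  apply Continuous.sub
  · apply Continuous.mul continuous_const
    apply continuous_finset_sum
    intro i _
    apply continuous_finset_sum
    intro j _
    apply continuous_finset_sum
    intro l _
    exact ((cont_entry i j).mul (cont_entry i l)).mul continuous_const
  · apply continuous_finset_sum
    intro i _
    apply continuous_finset_sum
    intro j _
    exact (cont_entry i j).mul continuous_const

lemma cont_uvec (A : Matrix (Fin k) (Fin k) ℝ) (B : Matrix (Fin m) (Fin k) ℝ)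
    (j : Fin k) (i : Fin m) :
    Continuous fun D : Matrix (Fin m) (Fin k) ℝ => uvec A B D j i := by
  unfold uvec
  apply Continuous.add
  · apply Continuous.mul continuous_const
    apply Continuous.sub continuous_const
    apply continuous_finset_sum
    intro l _
    exact (cont_entry i l).mul continuous_const
  · exact cont_entry i j

lemma cont_updCol (A : Matrix (Fin k) (Fin k) ℝ) (B : Matrix (Fin m) (Fin k) ℝ)
    (j : Fin k) : Continuous fun D : Matrix (Fin m) (Fin k) ℝ => updCol A B D j := by
  apply continuous_pi
  intro i
  apply continuous_pi
  intro l
  by_cases h : l = j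
  · subst h
    have hshape : (fun D : Matrix (Fin m) (Fin k) ℝ => updCol A B D l i l)
        = fun D => uvec A B D l i / max (Real.sqrt (∑ i', (uvec A B D l i')^2)) 1 := by
      funext D
      rw [updCol_eq]
      simp [setCol, proj]
    show Continuous fun D : Matrix (Fin m) (Fin k) ℝ => updCol A B D l i l
    rw [hshape]
    apply Continuous.div (cont_uvec A B l i)
    · apply Continuous.max _ continuous_const
      apply Real.continuous_sqrt.comp
      apply continuous_finset_sum
      intro i' _
      exact (cont_uvec A B l i').pow 2
    · intro D
      exact (projM_pos (uvec A B D l)).ne'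
  · have hshape : (fun D : Matrix (Fin m) (Fin k) ℝ => updCol A B D j i l)
        = fun D => D i l := by
      funext D
      rw [updCol_eq]
      simp [setCol, h]
    show Continuous fun D : Matrix (Fin m) (Fin k) ℝ => updCol A B D j i l
    rw [hshape]
    exact cont_entry i l

lemma cont_foldl (A : Matrix (Fin k) (Fin k) ℝ) (B : Matrix (Fin m) (Fin k) ℝ) :
    ∀ l : List (Fin k),
      Continuous fun D : Matrix (Fin m) (Fin k) ℝ => l.foldl (updCol A B) D := by
  intro l
  induction l with
  | nil => exact continuous_id
  | cons j l ih =>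
    simp only [List.foldl_cons]
    exact ih.comp (cont_updCol A B j)

lemma cont_bcdCycle (A : Matrix (Fin k) (Fin k) ℝ) (B : Matrix (Fin m) (Fin k) ℝ) :
    Continuous (bcdCycle A B (m := m)) := cont_foldl A B _

lemma g_eq_gS (A : Matrix (Fin k) (Fin k) ℝ) (B D : Matrix (Fin m) (Fin k) ℝ) :
    (1/2) * Matrix.trace (Dᵀ * D * A) - Matrix.trace (Dᵀ * B) = gS A B D := by
  have h1 : Matrix.trace (Dᵀ * D * A) = ∑ j, ∑ l, ∑ i, D i j * D i l * A l j := by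
    simp only [Matrix.trace, Matrix.diag, Matrix.mul_apply, Matrix.transpose_apply]
    refine Finset.sum_congr rfl fun j _ => ?_
    refine Finset.sum_congr rfl fun l _ => ?_
    rw [Finset.sum_mul]
  have h2 : Matrix.trace (Dᵀ * B) = ∑ j, ∑ i : Fin m, D i j * B i j := by
    rw [Matrix.trace]
    refine Finset.sum_congr rfl fun j _ => ?_
    simp [Matrix.diag, Matrix.mul_apply]
  have h1' : ∑ j, ∑ l, ∑ i : Fin m, D i j * D i l * A l j
      = ∑ i : Fin m, ∑ j, ∑ l, D i j * D i l * A l j :=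
    calc ∑ j, ∑ l, ∑ i : Fin m, D i j * D i l * A l j
        = ∑ j, ∑ i : Fin m, ∑ l, D i j * D i l * A l j :=
          Finset.sum_congr rfl fun j _ => Finset.sum_comm
      _ = ∑ i : Fin m, ∑ j, ∑ l, D i j * D i l * A l j := Finset.sum_comm
  have h2' : ∑ j, ∑ i : Fin m, D i j * B i j = ∑ i : Fin m, ∑ j, D i j * B i j :=
    Finset.sum_comm
  rw [h1, h2, h1', h2']
  rfl


lemma isCompact_feas : IsCompact {D : Matrix (Fin m) (Fin k) ℝ | Feas D} := by
  have hclosed : IsClosed {D : Matrix (Fin m) (Fin k) ℝ | Feas D} := by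
    have heq : {D : Matrix (Fin m) (Fin k) ℝ | Feas D}
        = ⋂ j : Fin k, {D : Matrix (Fin m) (Fin k) ℝ | ∑ i, (D i j)^2 ≤ 1} := by
      ext D; simp [Feas, Set.mem_iInter]
    rw [heq]
    refine isClosed_iInter fun j => ?_
    exact isClosed_le (continuous_finset_sum _ fun i _ => (cont_entry i j).pow 2)
      continuous_const
  have hK : IsCompact (Set.pi Set.univ fun _ : Fin m =>
      (Set.pi Set.univ fun _ : Fin k => Set.Icc (-1:ℝ) 1)) :=
    isCompact_univ_pi fun _ => isCompact_univ_pi fun _ => isCompact_Icc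
  refine IsCompact.of_isClosed_subset hK hclosed ?_
  intro D hD
  refine Set.mem_pi.2 ?_
  intro i _
  rw [Set.mem_pi]
  intro j _
  have h1 : (D i j)^2 ≤ 1 := by
    have h2 : (D i j)^2 ≤ ∑ i', (D i' j)^2 :=
      Finset.single_le_sum (fun i' _ => sq_nonneg (D i' j)) (Finset.mem_univ i)
    exact le_trans h2 (hD j)
  constructor <;> nlinarith

end BCDaux

set_option maxHeartbeats 1000000 in
open BCDaux in
/-- Block-coordinate descent on `g(D) = (1/2)Tr(DᵀDA) − Tr(DᵀB)` over the product of
unit `ℓ²`-balls converges to the global minimizer of `g` on that set, when `A` is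
symmetric positive definite. -/
theorem bcd_converges_to_global_min (m k : ℕ)
    (A : Matrix (Fin k) (Fin k) ℝ) (hA : A.PosDef)
    (B : Matrix (Fin m) (Fin k) ℝ)
    (g : Matrix (Fin m) (Fin k) ℝ → ℝ)
    (hg : g = fun D => (1/2) * Matrix.trace (Dᵀ * D * A) - Matrix.trace (Dᵀ * B))
    (C : Set (Matrix (Fin m) (Fin k) ℝ))
    (hC : C = {D | ∀ j : Fin k, ∑ i, (D i j)^2 ≤ 1})
    (Dseq : ℕ → Matrix (Fin m) (Fin k) ℝ)
    (h0 : Dseq 0 ∈ C)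
    (hrec : ∀ n : ℕ, Dseq (n + 1) = bcdCycle A B (Dseq n)) :
    ∃ Dstar : Matrix (Fin m) (Fin k) ℝ, Dstar ∈ C ∧ (∀ D ∈ C, g Dstar ≤ g D) ∧
      Filter.Tendsto Dseq Filter.atTop (nhds Dstar) := by
  haveI : FirstCountableTopology (Matrix (Fin m) (Fin k) ℝ) :=
    inferInstanceAs (FirstCountableTopology (Fin m → Fin k → ℝ))
  have hsym : ∀ a b, A a b = A b a := fun a b => by
    have := hA.1.apply a b; simpa using this.symm
  have hgfun : g = gS A B := by
    rw [hg]; funext D; exact g_eq_gS A B D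
  have hmemFeas : ∀ D, D ∈ C ↔ Feas D := by
    intro D; rw [hC]; exact Iff.rfl
  have hFeas : ∀ n, Feas (Dseq n) := by
    intro n
    induction n with
    | zero => exact (hmemFeas _).1 h0
    | succ n ih =>
      rw [hrec n]
      exact (foldl_feas hA hsym B (List.finRange k) (Dseq n) ih).1
  have hdec : ∀ n, gS A B (Dseq (n+1)) ≤ gS A B (Dseq n) := by
    intro n
    rw [hrec n]
    exact (foldl_feas hA hsym B (List.finRange k) (Dseq n) (hFeas n)).2
  have hScomp : IsCompact {D : Matrix (Fin m) (Fin k) ℝ | Feas D} := isCompact_feas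
  have h0S : (0 : Matrix (Fin m) (Fin k) ℝ) ∈ {D : Matrix (Fin m) (Fin k) ℝ | Feas D} := by
    intro j; simp
  obtain ⟨Dstar, hDstarS, hminOn⟩ :=
    hScomp.exists_isMinOn ⟨0, h0S⟩ (cont_gS A B).continuousOn
  have hminS : ∀ E, Feas E → gS A B Dstar ≤ gS A B E := fun E hE =>
    isMinOn_iff.1 hminOn E hE
  refine ⟨Dstar, (hmemFeas _).2 hDstarS, ?_, ?_⟩
  · intro D hD
    rw [hgfun]
    exact hminS D ((hmemFeas _).1 hD)
  · set c := ⨅ n, gS A B (Dseq n) with hc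
    have hbdd : BddBelow (Set.range fun n => gS A B (Dseq n)) := by
      refine ⟨gS A B Dstar, ?_⟩
      rintro x ⟨n, rfl⟩
      exact hminS _ (hFeas n)
    have hgtend : Filter.Tendsto (fun n => gS A B (Dseq n)) Filter.atTop (nhds c) :=
      tendsto_atTop_ciInf (antitone_nat_of_succ_le hdec) hbdd
    apply Filter.tendsto_of_subseq_tendsto
    intro ns hns
    obtain ⟨L, hLS, φ, hφ, hLtend⟩ :=
      hScomp.tendsto_subseq (x := fun n => Dseq (ns n)) (fun n => hFeas (ns n))
    have hnsφ : Filter.Tendsto (fun n => ns (φ n)) Filter.atTop Filter.atTop :=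
      hns.comp hφ.tendsto_atTop
    have hLtend' : Filter.Tendsto (fun n => Dseq (ns (φ n))) Filter.atTop (nhds L) := hLtend
    have hgL : gS A B L = c := by
      have t1 : Filter.Tendsto (fun n => gS A B (Dseq (ns (φ n)))) Filter.atTop
          (nhds (gS A B L)) := ((cont_gS A B).tendsto L).comp hLtend'
      have t2 : Filter.Tendsto (fun n => gS A B (Dseq (ns (φ n)))) Filter.atTop (nhds c) :=
        hgtend.comp hnsφ
      exact tendsto_nhds_unique t1 t2
    have hgTL : gS A B (bcdCycle A B L) = c := by
      have hfun : (fun n => Dseq (ns (φ n) + 1))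
          = fun n => bcdCycle A B (Dseq (ns (φ n))) := funext fun n => hrec _
      have t1 : Filter.Tendsto (fun n => Dseq (ns (φ n) + 1)) Filter.atTop
          (nhds (bcdCycle A B L)) := by
        rw [hfun]
        exact ((cont_bcdCycle A B).tendsto L).comp hLtend'
      have hnsφ1 : Filter.Tendsto (fun n => ns (φ n) + 1) Filter.atTop Filter.atTop :=
        Filter.tendsto_atTop_mono (fun n => Nat.le_succ (ns (φ n))) hnsφ
      have t2 : Filter.Tendsto (fun n => gS A B (Dseq (ns (φ n) + 1))) Filter.atTop
          (nhds c) := hgtend.comp hnsφ1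
      exact tendsto_nhds_unique (((cont_gS A B).tendsto _).comp t1) t2
    have hfoldeq : gS A B ((List.finRange k).foldl (updCol A B) L) = gS A B L := by
      have : bcdCycle A B L = (List.finRange k).foldl (updCol A B) L := rfl
      rw [← this, hgTL, hgL]
    have hfix := foldl_fix hA hsym B (List.finRange k) L hLS hfoldeq
    have hLmin : ∀ E, Feas E → gS A B L ≤ gS A B E :=
      fixed_global_min hA hsym hLS (fun j => hfix.1 j (List.mem_finRange j))
    have hLD : L = Dstar := min_unique hA hsym hLS hDstarS hLmin hminS
    exact ⟨φ, by rw [← hLD]; exact hLtend'⟩
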